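/- Let V be a 3-dimensional real inner product space with orthonormal basis {X, Y, U}, F skew-symmetric with FX = Y, FY = -X, FU = 0. Suppose A₁, A₁* are symmetric endomorphisms with trace A₁ = trace A₁* = 0, A₁U = X, A₁*U = Y, A₁Y = A₁*X, A₁X = -F(A₁*X) + U, and A₁*X = F(A₁X). Then A₁X = U, A₁Y = 0, A₁*X = 0, A₁*Y = U, and consequently [A₁,A₁*]X = -Y ≠ 2Y. -/

import Mathlib

open scoped RealInnerProductSpace

theorem stmt14 {V : Type*} [NormedAddCommGroup V] [InnerProductSpace ℝ V]
    [FiniteDimensional ℝ V] (hdim : Module.finrank ℝ V = 3)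
    (X Y U : V) (horth : Orthonormal ℝ ![X, Y, U])
    (F : V →ₗ[ℝ] V) (hskew : ∀ W Z : V, ⟪F W, Z⟫ = -⟪W, F Z⟫)
    (hFX : F X = Y) (hFY : F Y = -X) (hFU : F U = 0)
    (A₁ A₁s : V →ₗ[ℝ] V) (hA₁ : A₁.IsSymmetric) (hA₁s : A₁s.IsSymmetric)
    (htr1 : LinearMap.trace ℝ V A₁ = 0) (htr2 : LinearMap.trace ℝ V A₁s = 0)
    (h1 : A₁ U = X) (h2 : A₁s U = Y)
    (h3 : A₁ Y = A₁s X)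
    (h4 : A₁ X = -F (A₁s X) + U)
    (h5 : A₁s X = F (A₁ X)) :
    A₁ X = U ∧ A₁ Y = 0 ∧ A₁s X = 0 ∧ A₁s Y = U ∧
      A₁ (A₁s X) - A₁s (A₁ X) = -Y ∧
      A₁ (A₁s X) - A₁s (A₁ X) ≠ (2 : ℝ) • Y := by
  -- inner product facts
  have hon := orthonormal_iff_ite.mp horth
  have hXX : ⟪X, X⟫ = 1 := by simpa using hon 0 0
  have hYY : ⟪Y, Y⟫ = 1 := by simpa using hon 1 1
  have hUU : ⟪U, U⟫ = 1 := by simpa using hon 2 2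
  have hXY : ⟪X, Y⟫ = 0 := by simpa using hon 0 1
  have hXU : ⟪X, U⟫ = 0 := by simpa using hon 0 2
  have hYU : ⟪Y, U⟫ = 0 := by simpa using hon 1 2
  have hYX : ⟪Y, X⟫ = 0 := by rw [real_inner_comm]; exact hXY
  have hUX : ⟪U, X⟫ = 0 := by rw [real_inner_comm]; exact hXU
  have hUY : ⟪U, Y⟫ = 0 := by rw [real_inner_comm]; exact hYU
  -- build an orthonormal basis
  have hcard : Fintype.card (Fin 3) = Module.finrank ℝ V := by simp [hdim]
  set b0 : Module.Basis (Fin 3) ℝ V :=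
    basisOfLinearIndependentOfCardEqFinrank horth.linearIndependent hcard with hb0
  have hb0coe : (b0 : Fin 3 → V) = ![X, Y, U] :=
    coe_basisOfLinearIndependentOfCardEqFinrank _ _
  have hb0orth : Orthonormal ℝ b0 := by rw [hb0coe]; exact horth
  set b : OrthonormalBasis (Fin 3) ℝ V := b0.toOrthonormalBasis hb0orth with hb
  have hbcoe : ∀ i, b i = ![X, Y, U] i := by
    intro i; rw [hb, Module.Basis.coe_toOrthonormalBasis, hb0coe]
  have hb0' : b 0 = X := hbcoe 0
  have hb1' : b 1 = Y := hbcoe 1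
  have hb2' : b 2 = U := hbcoe 2
  -- expansion of any vector
  have key : ∀ v : V, v = ⟪X, v⟫ • X + ⟪Y, v⟫ • Y + ⟪U, v⟫ • U := by
    intro v
    have := b.sum_repr' v
    rw [Fin.sum_univ_three, hb0', hb1', hb2'] at this
    exact this.symm
  -- trace formula
  have htr : ∀ T : V →ₗ[ℝ] V,
      LinearMap.trace ℝ V T = ⟪X, T X⟫ + ⟪Y, T Y⟫ + ⟪U, T U⟫ := by
    intro T
    rw [LinearMap.trace_eq_matrix_trace ℝ b.toBasis T, Matrix.trace, Fin.sum_univ_three]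
    simp only [Matrix.diag_apply, LinearMap.toMatrix_apply,
      OrthonormalBasis.coe_toBasis_repr_apply, OrthonormalBasis.repr_apply_apply,
      OrthonormalBasis.coe_toBasis, hb0', hb1', hb2']
  -- coordinates of A₁ X
  set a : ℝ := ⟪X, A₁ X⟫ with ha
  set b' : ℝ := ⟪Y, A₁ X⟫ with hbb
  have hc : ⟪U, A₁ X⟫ = 1 := by
    rw [real_inner_comm, hA₁ X U, h1]; exact hXX
  have e1 : A₁ X = a • X + b' • Y + (1 : ℝ) • U := by
    rw [ha, hbb, ← hc]; exact key (A₁ X)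
  -- A₁s X via h5
  have e2 : A₁s X = (-b') • X + a • Y := by
    rw [h5, e1]
    simp [hFX, hFY, hFU, neg_smul]
    abel
  -- symmetry forces b' = 0
  have hb'0 : b' = 0 := by
    have hs := hA₁ X Y
    rw [e1, h3, e2] at hs
    simp only [inner_add_left, inner_add_right, real_inner_smul_left, real_inner_smul_right,
      hXX, hYY, hXY, hYX, hXU, hUY] at hs
    linarith
  -- trace forces a = 0
  have ha0 : a = 0 := by
    have ht := htr A₁
    rw [htr1, h1, h3, e2] at ht
    simp only [inner_add_right, real_inner_smul_right, hXX, hYY, hYX, hUX, ← ha] at ht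
    linarith
  have c1 : A₁ X = U := by rw [e1, ha0, hb'0]; simp
  have c3 : A₁s X = 0 := by rw [e2, ha0, hb'0]; simp
  have c2 : A₁ Y = 0 := by rw [h3, c3]
  -- A₁s Y
  have d1 : ⟪X, A₁s Y⟫ = 0 := by
    rw [real_inner_comm, hA₁s Y X, c3, inner_zero_right]
  have d2 : ⟪Y, A₁s Y⟫ = 0 := by
    have ht := htr A₁s
    rw [htr2, c3, h2] at ht
    simp only [inner_zero_right, hUY] at ht; linarith
  have c4 : A₁s Y = U := by
    have := key (A₁s Y)
    rw [d1, d2] at this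
    have hu : ⟪U, A₁s Y⟫ = 1 := by
      rw [real_inner_comm, hA₁s Y U, h2]; exact hYY
    rw [hu] at this
    simpa using this
  have c5 : A₁ (A₁s X) - A₁s (A₁ X) = -Y := by
    rw [c3, c1, h2, map_zero, zero_sub]
  refine ⟨c1, c2, c3, c4, c5, ?_⟩
  rw [c5]
  intro hcon
  have h' : ⟪Y, -Y⟫ = ⟪Y, (2:ℝ) • Y⟫ := by rw [hcon]
  rw [inner_neg_right, real_inner_smul_right, hYY] at h'
  norm_num at h'
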